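/- Magic identity for the derivative of the matrix exponential at a symmetric matrix: Let n ≥ 1, let M ∈ M_n(ℝ) be a symmetric matrix (Mᵀ = M) and let V ∈ ℝ^n. Then for every index a ∈ {1,…,n}, ∑_{b,d=1}^n (D exp(M)[E_{bd}])_{ab} · V_d = (exp(M)·V)_a, where exp is the matrix exponential, D exp(M)[H] denotes the Fréchet derivative of exp at M in the direction H (equivalently, the derivative at ε = 0 of ε ↦ exp(M + εH)), and E_{bd} is the elementary matrix with entry 1 at position (b,d) and 0 elsewhere. -/

import Mathlib

noncomputable section

/-- The matrix exponential `exp(M) = ∑_{k ≥ 0} M^k / k!`. -/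

lemma std_mul_apply (n : ℕ) (A B : Matrix (Fin n) (Fin n) ℝ) (p q x y : Fin n) :
    (A * Matrix.single p q (1:ℝ) * B) x y = A x p * B q y := by
  simp [Matrix.mul_apply, Matrix.single, Finset.mul_sum, Finset.sum_mul, ite_and,
    Finset.sum_ite_eq, Finset.sum_ite_eq']

lemma pow_entry_bound (n : ℕ) (M : Matrix (Fin n) (Fin n) ℝ) (k : ℕ) (a b : Fin n) :
    |(M ^ k) a b| ≤ (1 + ∑ i, ∑ j, |M i j|) ^ k := by
  set c : ℝ := 1 + ∑ i, ∑ j, |M i j| with hc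
  have hc0 : (0:ℝ) ≤ c := by positivity
  induction k generalizing a b with
  | zero =>
    simp [Matrix.one_apply]
    split <;> simp
  | succ k ih =>
    have : (M ^ (k+1)) a b = ∑ j, M a j * (M ^ k) j b := by
      rw [pow_succ']; simp [Matrix.mul_apply]
    rw [this]
    calc |∑ j, M a j * (M ^ k) j b| ≤ ∑ j, |M a j * (M ^ k) j b| :=
          Finset.abs_sum_le_sum_abs _ _
      _ ≤ ∑ j, |M a j| * c ^ k := by
          refine Finset.sum_le_sum fun j _ => ?_
          rw [abs_mul]
          exact mul_le_mul_of_nonneg_left (ih j b) (abs_nonneg _)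
      _ = (∑ j, |M a j|) * c ^ k := by rw [Finset.sum_mul]
      _ ≤ c * c ^ k := by
          refine mul_le_mul_of_nonneg_right ?_ (by positivity)
          calc ∑ j, |M a j| ≤ ∑ i, ∑ j, |M i j| :=
                Finset.single_le_sum (f := fun i => ∑ j, |M i j|)
                  (fun i _ => by positivity) (Finset.mem_univ a)
            _ ≤ c := by rw [hc]; linarith
      _ = c ^ (k+1) := by ring

theorem matExp_deriv_magic_identity' (n : ℕ) (hn : 1 ≤ n)
    (M : Matrix (Fin n) (Fin n) ℝ) (hM : M.transpose = M)
    (V : Fin n → ℝ) (a : Fin n) :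
    ∑ b : Fin n, ∑ e : Fin n,
        (∑' k : ℕ, (((k + 1).factorial : ℝ))⁻¹ •
          ∑ i ∈ Finset.range (k + 1),
            M ^ i * Matrix.single b e (1:ℝ) * M ^ (k - i)) a b * V e
      = (∑' k : ℕ, ((k.factorial : ℝ))⁻¹ • M ^ k).mulVec V a := by
  set c : ℝ := 1 + ∑ i, ∑ j, |M i j| with hc
  have hc0 : (0:ℝ) ≤ c := by positivity
  have hcf : Summable (fun k : ℕ => c ^ k / (k.factorial : ℝ)) :=
    Real.summable_pow_div_factorial c
  -- entrywise summability of the exponential series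
  have hexp : ∀ x y : Fin n, Summable (fun k : ℕ => ((k.factorial : ℝ))⁻¹ * (M ^ k) x y) := by
    intro x y
    refine Summable.of_norm_bounded hcf fun k => ?_
    rw [Real.norm_eq_abs, abs_mul, abs_inv, Nat.abs_cast, div_eq_inv_mul]
    exact mul_le_mul_of_nonneg_left (pow_entry_bound n M k x y)
      (by positivity)
  -- entrywise summability of the derivative series
  have hder : ∀ (b e x y : Fin n), Summable (fun k : ℕ =>
      (((k + 1).factorial : ℝ))⁻¹ *
        ∑ i ∈ Finset.range (k + 1),
          (M ^ i * Matrix.single b e (1:ℝ) * M ^ (k - i)) x y) := by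
    intro b e x y
    refine Summable.of_norm_bounded hcf fun k => ?_
    rw [Real.norm_eq_abs, abs_mul, abs_inv, Nat.abs_cast]
    have h1 : |∑ i ∈ Finset.range (k + 1),
        (M ^ i * Matrix.single b e (1:ℝ) * M ^ (k - i)) x y| ≤ (k+1) * c ^ k := by
      calc _ ≤ ∑ i ∈ Finset.range (k + 1),
            |(M ^ i * Matrix.single b e (1:ℝ) * M ^ (k - i)) x y| :=
          Finset.abs_sum_le_sum_abs _ _
        _ ≤ ∑ i ∈ Finset.range (k + 1), c ^ k := by
            refine Finset.sum_le_sum fun i hi => ?_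
            have hi' := Finset.mem_range.mp hi
            rw [std_mul_apply, abs_mul]
            have := mul_le_mul (pow_entry_bound n M i x b) (pow_entry_bound n M (k-i) e y)
              (abs_nonneg _) (by positivity)
            calc |(M ^ i) x b| * |(M ^ (k-i)) e y| ≤ c ^ i * c ^ (k - i) := this
              _ = c ^ k := by
                  rw [← pow_add]
                  congr 1
                  omega
        _ = (k+1) * c ^ k := by simp [Finset.sum_const]
    calc ((((k + 1).factorial : ℝ))⁻¹) * |_| ≤ (((k + 1).factorial : ℝ))⁻¹ * ((k+1) * c ^ k) :=
          mul_le_mul_of_nonneg_left h1 (by positivity)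
      _ = c ^ k / (k.factorial : ℝ) := by
          rw [Nat.factorial_succ]
          push_cast
          rw [div_eq_inv_mul]
          field_simp
    done
  -- matrix-level summability
  have hSexp : Summable (fun k : ℕ => ((k.factorial : ℝ))⁻¹ • M ^ k) :=
    Pi.summable.2 fun x => Pi.summable.2 fun y => by
      simpa [Matrix.smul_apply, smul_eq_mul] using hexp x y
  have hSder : ∀ b e : Fin n, Summable (fun k : ℕ => (((k + 1).factorial : ℝ))⁻¹ •
      ∑ i ∈ Finset.range (k + 1), M ^ i * Matrix.single b e (1:ℝ) * M ^ (k - i)) := by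
    intro b e
    refine Pi.summable.2 fun x => Pi.summable.2 fun y => ?_
    simpa [Matrix.smul_apply, smul_eq_mul, Matrix.sum_apply] using hder b e x y
  -- entries of the tsums
  have hExpEntry : ∀ x y : Fin n,
      (∑' k : ℕ, ((k.factorial : ℝ))⁻¹ • M ^ k) x y
        = ∑' k : ℕ, ((k.factorial : ℝ))⁻¹ * (M ^ k) x y := by
    intro x y
    erw [tsum_apply hSexp, tsum_apply (Pi.summable.1 hSexp x)]
    exact tsum_congr fun k => by simp [Matrix.smul_apply, smul_eq_mul]
  have hDerEntry : ∀ b e x y : Fin n,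
      (∑' k : ℕ, (((k + 1).factorial : ℝ))⁻¹ •
          ∑ i ∈ Finset.range (k + 1),
            M ^ i * Matrix.single b e (1:ℝ) * M ^ (k - i)) x y
        = ∑' k : ℕ, (((k + 1).factorial : ℝ))⁻¹ *
            ∑ i ∈ Finset.range (k + 1),
              (M ^ i * Matrix.single b e (1:ℝ) * M ^ (k - i)) x y := by
    intro b e x y
    erw [tsum_apply (hSder b e), tsum_apply (Pi.summable.1 (hSder b e) x)]
    exact tsum_congr fun k => by simp [Matrix.smul_apply, smul_eq_mul, Matrix.sum_apply, Finset.mul_sum]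
  -- symmetry of powers
  have hsym : ∀ (j : ℕ) (x y : Fin n), (M ^ j) x y = (M ^ j) y x := by
    intro j x y
    have h : (M ^ j).transpose = M ^ j := by rw [Matrix.transpose_pow, hM]
    conv_lhs => rw [← h, Matrix.transpose_apply]
  -- main computation
  have hRHS : (∑' k : ℕ, ((k.factorial : ℝ))⁻¹ • M ^ k).mulVec V a
      = ∑' k : ℕ, ∑ e : Fin n, ((k.factorial : ℝ))⁻¹ * (M ^ k) a e * V e := by
    have h0 : (∑' k : ℕ, ((k.factorial : ℝ))⁻¹ • M ^ k).mulVec V a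
        = ∑ e : Fin n, (∑' k : ℕ, ((k.factorial : ℝ))⁻¹ • M ^ k) a e * V e := by
      simp [Matrix.mulVec, dotProduct]
    rw [h0]
    calc ∑ e : Fin n, (∑' k : ℕ, ((k.factorial : ℝ))⁻¹ • M ^ k) a e * V e
        = ∑ e : Fin n, ∑' k : ℕ, ((k.factorial : ℝ))⁻¹ * (M ^ k) a e * V e := by
          refine Finset.sum_congr rfl fun e _ => ?_
          rw [hExpEntry a e, ← tsum_mul_right]
      _ = ∑' k : ℕ, ∑ e : Fin n, ((k.factorial : ℝ))⁻¹ * (M ^ k) a e * V e :=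
          (Summable.tsum_finsetSum fun e _ => (hexp a e).mul_right (V e)).symm
  rw [hRHS]
  have hLHS : ∑ b : Fin n, ∑ e : Fin n,
        (∑' k : ℕ, (((k + 1).factorial : ℝ))⁻¹ •
          ∑ i ∈ Finset.range (k + 1),
            M ^ i * Matrix.single b e (1:ℝ) * M ^ (k - i)) a b * V e
      = ∑' k : ℕ, ∑ b : Fin n, ∑ e : Fin n,
          ((((k + 1).factorial : ℝ))⁻¹ *
            ∑ i ∈ Finset.range (k + 1),
              (M ^ i * Matrix.single b e (1:ℝ) * M ^ (k - i)) a b) * V e := by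
    calc ∑ b : Fin n, ∑ e : Fin n,
          (∑' k : ℕ, (((k + 1).factorial : ℝ))⁻¹ •
            ∑ i ∈ Finset.range (k + 1),
              M ^ i * Matrix.single b e (1:ℝ) * M ^ (k - i)) a b * V e
        = ∑ b : Fin n, ∑ e : Fin n, ∑' k : ℕ,
            ((((k + 1).factorial : ℝ))⁻¹ *
              ∑ i ∈ Finset.range (k + 1),
                (M ^ i * Matrix.single b e (1:ℝ) * M ^ (k - i)) a b) * V e := by
          refine Finset.sum_congr rfl fun b _ => Finset.sum_congr rfl fun e _ => ?_
          rw [hDerEntry b e a b, ← tsum_mul_right]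
      _ = ∑ b : Fin n, ∑' k : ℕ, ∑ e : Fin n,
            ((((k + 1).factorial : ℝ))⁻¹ *
              ∑ i ∈ Finset.range (k + 1),
                (M ^ i * Matrix.single b e (1:ℝ) * M ^ (k - i)) a b) * V e := by
          refine Finset.sum_congr rfl fun b _ => ?_
          exact (Summable.tsum_finsetSum fun e _ => (hder b e a b).mul_right (V e)).symm
      _ = ∑' k : ℕ, ∑ b : Fin n, ∑ e : Fin n,
            ((((k + 1).factorial : ℝ))⁻¹ *
              ∑ i ∈ Finset.range (k + 1),
                (M ^ i * Matrix.single b e (1:ℝ) * M ^ (k - i)) a b) * V e := by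
          refine (Summable.tsum_finsetSum fun b _ => ?_).symm
          exact summable_sum fun e _ => (hder b e a b).mul_right (V e)
  rw [hLHS]
  refine tsum_congr fun k => ?_
  rw [Finset.sum_comm]
  refine Finset.sum_congr rfl fun e _ => ?_
  have hstep : ∀ b : Fin n, ∑ i ∈ Finset.range (k + 1),
      (M ^ i * Matrix.single b e (1:ℝ) * M ^ (k - i)) a b
      = ∑ i ∈ Finset.range (k + 1), (M ^ i) a b * (M ^ (k - i)) e b := by
    intro b
    exact Finset.sum_congr rfl fun i _ => std_mul_apply n _ _ b e a b
  have hkey : ∑ b : Fin n, ∑ i ∈ Finset.range (k + 1),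
      (M ^ i) a b * (M ^ (k - i)) e b = (k + 1 : ℝ) * (M ^ k) a e := by
    rw [Finset.sum_comm]
    have h1 : ∀ i ∈ Finset.range (k + 1),
        ∑ b : Fin n, (M ^ i) a b * (M ^ (k - i)) e b = (M ^ k) a e := by
      intro i hi
      have hi' : i + (k - i) = k := by
        have := Finset.mem_range.mp hi; omega
      calc ∑ b : Fin n, (M ^ i) a b * (M ^ (k - i)) e b
          = ∑ b : Fin n, (M ^ i) a b * (M ^ (k - i)) b e :=
            Finset.sum_congr rfl fun b _ => by rw [hsym (k - i) e b]
        _ = (M ^ i * M ^ (k - i)) a e := (Matrix.mul_apply).symm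
        _ = (M ^ k) a e := by rw [← pow_add, hi']
    rw [Finset.sum_congr rfl h1, Finset.sum_const]
    simp
  calc ∑ b : Fin n, ((((k + 1).factorial : ℝ))⁻¹ *
        ∑ i ∈ Finset.range (k + 1),
          (M ^ i * Matrix.single b e (1:ℝ) * M ^ (k - i)) a b) * V e
      = (((k + 1).factorial : ℝ))⁻¹ *
        (∑ b : Fin n, ∑ i ∈ Finset.range (k + 1),
          (M ^ i) a b * (M ^ (k - i)) e b) * V e := by
        rw [Finset.mul_sum, Finset.sum_mul]
        exact Finset.sum_congr rfl fun b _ => by rw [hstep b]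
    _ = ((k.factorial : ℝ))⁻¹ * (M ^ k) a e * V e := by
        rw [hkey, Nat.factorial_succ]
        push_cast
        have hk : ((k.factorial : ℝ)) ≠ 0 := by positivity
        field_simp

def matExp (n : ℕ) (M : Matrix (Fin n) (Fin n) ℝ) : Matrix (Fin n) (Fin n) ℝ :=
  ∑' k : ℕ, ((k.factorial : ℝ))⁻¹ • M ^ k

/-- The Fréchet derivative of the matrix exponential at `M` in direction `H`:
`D exp(M)[H] = ∑_{k ≥ 0} (1/(k+1)!) ∑_{i=0}^k M^i H M^(k-i)`. -/
def matExpDeriv (n : ℕ) (M H : Matrix (Fin n) (Fin n) ℝ) : Matrix (Fin n) (Fin n) ℝ :=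
  ∑' k : ℕ, (((k + 1).factorial : ℝ))⁻¹ •
    ∑ i ∈ Finset.range (k + 1), M ^ i * H * M ^ (k - i)

/-- **Magic identity for the derivative of the matrix exponential at a symmetric
matrix**: for `M` symmetric and `V ∈ ℝ^n`, for every index `a`,
`∑_{b,d} (D exp(M)[E_{bd}])_{ab} V_d = (exp(M) V)_a`,
where `E_{bd}` is the elementary matrix with a single `1` at position `(b,d)`. -/
theorem matExp_deriv_magic_identity (n : ℕ) (hn : 1 ≤ n)
    (M : Matrix (Fin n) (Fin n) ℝ) (hM : M.transpose = M)
    (V : Fin n → ℝ) (a : Fin n) :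
    ∑ b : Fin n, ∑ e : Fin n,
        matExpDeriv n M (Matrix.single b e (1 : ℝ)) a b * V e
      = (matExp n M).mulVec V a := by
  unfold matExpDeriv matExp
  exact matExp_deriv_magic_identity' n hn M hM V a
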